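/- Let f be a system of n homogeneous polynomials on S^n with maximal degree D, and x ∈ S^n with f(x) ≠ 0. Then f has no zero in the open ball B(x, r) where r = min{‖f(x)‖_∞ / (‖f‖√D), √2}. -/

import Mathlib

open MvPolynomial Finset
open scoped RealInnerProductSpace

/-- The Bombieri–Weyl inner product on (homogeneous) polynomials. -/
noncomputable def bwInner {m : ℕ} (g h : MvPolynomial (Fin m) ℝ) : ℝ :=
  ∑ J ∈ g.support ∪ h.support,
    g.coeff J * h.coeff J / (Nat.multinomial Finset.univ J : ℝ)

/-- The Bombieri–Weyl norm. -/
noncomputable def bwNorm {m : ℕ} (g : MvPolynomial (Fin m) ℝ) : ℝ :=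
  Real.sqrt (bwInner g g)

private lemma multinomial_sum_pow {m : ℕ} (v : Fin m → ℝ) (k : ℕ) :
    ∑ J ∈ Finset.finsuppAntidiag (Finset.univ : Finset (Fin m)) k,
      (Nat.multinomial Finset.univ J : ℝ) * ∏ i, v i ^ J i
      = (∑ i, v i) ^ k := by
  rw [Finset.sum_pow_eq_sum_piAntidiag]
  refine Finset.sum_nbij' (fun J => (J : Fin m → ℕ))
    (fun g => Finsupp.equivFunOnFinite.symm g) ?_ ?_ ?_ ?_ ?_
  · intro J hJ
    rw [Finset.mem_finsuppAntidiag] at hJ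
    rw [Finset.mem_piAntidiag]
    exact ⟨hJ.1, fun i _ => Finset.mem_univ i⟩
  · intro g hg
    rw [Finset.mem_piAntidiag] at hg
    rw [Finset.mem_finsuppAntidiag]
    refine ⟨?_, Finset.subset_univ _⟩
    simpa using hg.1
  · intro J _
    ext i
    simp
  · intro g _
    rfl
  · intro J _
    rfl

private lemma bwInner_self_nonneg {m : ℕ} (g : MvPolynomial (Fin m) ℝ) :
    0 ≤ bwInner g g := by
  unfold bwInner
  refine Finset.sum_nonneg fun J _ => ?_
  have h1 : (0 : ℝ) < (Nat.multinomial Finset.univ J : ℝ) := by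
    exact_mod_cast Nat.multinomial_pos _ _
  exact div_nonneg (mul_self_nonneg _) h1.le

/-- Key Lipschitz-type estimate via the reproducing kernel property. -/
private lemma lipschitz_sq {m k : ℕ} (g : MvPolynomial (Fin m) ℝ)
    (hg : g.IsHomogeneous k) (x y : Fin m → ℝ) :
    (eval x g - eval y g) ^ 2 ≤
      bwInner g g * ((∑ i, x i * x i) ^ k - 2 * (∑ i, x i * y i) ^ k
        + (∑ i, y i * y i) ^ k) := by
  classical
  set T := Finset.finsuppAntidiag (Finset.univ : Finset (Fin m)) k with hT
  have hsub : g.support ⊆ T := by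
    intro J hJ
    have hcoeff : g.coeff J ≠ 0 := MvPolynomial.mem_support_iff.1 hJ
    have hdeg : Finsupp.degree J = k := by
      rw [Finsupp.degree_eq_weight_one]; exact hg hcoeff
    rw [hT, Finset.mem_finsuppAntidiag]
    refine ⟨?_, Finset.subset_univ _⟩
    rw [← hdeg, Finsupp.degree]
    exact (Finset.sum_subset (Finset.subset_univ _)
      (fun i _ hi => Finsupp.notMem_support_iff.1 hi)).symm
  have hmpos : ∀ J : Fin m →₀ ℕ, (0 : ℝ) < (Nat.multinomial Finset.univ J : ℝ) := by
    intro J; exact_mod_cast Nat.multinomial_pos _ _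
  -- evaluation as sum over T
  have heval : ∀ v : Fin m → ℝ,
      eval v g = ∑ J ∈ T, g.coeff J * ∏ i, v i ^ J i := by
    intro v
    rw [MvPolynomial.eval_eq' v g]
    refine Finset.sum_subset hsub fun J _ hJ => ?_
    rw [MvPolynomial.notMem_support_iff.1 hJ, zero_mul]
  -- bwInner g g as sum over T
  have hinner : bwInner g g = ∑ J ∈ T,
      g.coeff J * g.coeff J / (Nat.multinomial Finset.univ J : ℝ) := by
    unfold bwInner
    rw [Finset.union_self]
    refine Finset.sum_subset hsub fun J _ hJ => ?_
    rw [MvPolynomial.notMem_support_iff.1 hJ]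
    simp
  -- Cauchy–Schwarz
  have key : (eval x g - eval y g) ^ 2 ≤
      (∑ J ∈ T, g.coeff J * g.coeff J / (Nat.multinomial Finset.univ J : ℝ)) *
      (∑ J ∈ T, (Nat.multinomial Finset.univ J : ℝ) *
        ((∏ i, x i ^ J i) - (∏ i, y i ^ J i)) ^ 2) := by
    have hdiff : eval x g - eval y g =
        ∑ J ∈ T, (g.coeff J / Real.sqrt (Nat.multinomial Finset.univ J : ℝ)) *
          (Real.sqrt (Nat.multinomial Finset.univ J : ℝ) *
            ((∏ i, x i ^ J i) - (∏ i, y i ^ J i))) := by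
      rw [heval x, heval y, ← Finset.sum_sub_distrib]
      refine Finset.sum_congr rfl fun J _ => ?_
      have hs : Real.sqrt (Nat.multinomial Finset.univ J : ℝ) ≠ 0 :=
        ne_of_gt (Real.sqrt_pos.2 (hmpos J))
      field_simp
    rw [hdiff]
    calc (∑ J ∈ T, (g.coeff J / Real.sqrt (Nat.multinomial Finset.univ J : ℝ)) *
          (Real.sqrt (Nat.multinomial Finset.univ J : ℝ) *
            ((∏ i, x i ^ J i) - (∏ i, y i ^ J i)))) ^ 2
        ≤ (∑ J ∈ T, (g.coeff J / Real.sqrt (Nat.multinomial Finset.univ J : ℝ)) ^ 2) *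
          (∑ J ∈ T, (Real.sqrt (Nat.multinomial Finset.univ J : ℝ) *
            ((∏ i, x i ^ J i) - (∏ i, y i ^ J i))) ^ 2) :=
          Finset.sum_mul_sq_le_sq_mul_sq _ _ _
      _ = _ := by
          congr 1
          · refine Finset.sum_congr rfl fun J _ => ?_
            rw [div_pow, Real.sq_sqrt (hmpos J).le, pow_two]
          · refine Finset.sum_congr rfl fun J _ => ?_
            rw [mul_pow, Real.sq_sqrt (hmpos J).le]
  rw [← hinner] at key
  refine key.trans (le_of_eq ?_)
  congr 1
  have expand : ∑ J ∈ T, (Nat.multinomial Finset.univ J : ℝ) *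
      ((∏ i, x i ^ J i) - (∏ i, y i ^ J i)) ^ 2
      = (∑ J ∈ T, (Nat.multinomial Finset.univ J : ℝ) * ∏ i, (x i * x i) ^ J i)
        - 2 * (∑ J ∈ T, (Nat.multinomial Finset.univ J : ℝ) * ∏ i, (x i * y i) ^ J i)
        + (∑ J ∈ T, (Nat.multinomial Finset.univ J : ℝ) * ∏ i, (y i * y i) ^ J i) := by
    rw [Finset.mul_sum, ← Finset.sum_sub_distrib, ← Finset.sum_add_distrib]
    refine Finset.sum_congr rfl fun J _ => ?_
    have hx2 : ∏ i, (x i * x i) ^ J i = (∏ i, x i ^ J i) * (∏ i, x i ^ J i) := by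
      rw [← Finset.prod_mul_distrib]
      exact Finset.prod_congr rfl fun i _ => mul_pow _ _ _
    have hxy : ∏ i, (x i * y i) ^ J i = (∏ i, x i ^ J i) * (∏ i, y i ^ J i) := by
      rw [← Finset.prod_mul_distrib]
      exact Finset.prod_congr rfl fun i _ => mul_pow _ _ _
    have hy2 : ∏ i, (y i * y i) ^ J i = (∏ i, y i ^ J i) * (∏ i, y i ^ J i) := by
      rw [← Finset.prod_mul_distrib]
      exact Finset.prod_congr rfl fun i _ => mul_pow _ _ _
    rw [hx2, hxy, hy2]
    ring
  rw [expand, hT, multinomial_sum_pow, multinomial_sum_pow, multinomial_sum_pow]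

/-- `1 - c ^ k ≤ k * (1 - c)` for `|c| ≤ 1`. -/
private lemma one_sub_pow_le (c : ℝ) (hc : |c| ≤ 1) (k : ℕ) :
    1 - c ^ k ≤ (k : ℝ) * (1 - c) := by
  have h1 : 1 - c ^ k = (1 - c) * ∑ i ∈ Finset.range k, c ^ i := by
    have := geom_sum_mul c k
    nlinarith [this]
  rw [h1]
  have hsum : ∑ i ∈ Finset.range k, c ^ i ≤ (k : ℝ) := by
    calc ∑ i ∈ Finset.range k, c ^ i ≤ ∑ i ∈ Finset.range k, (1 : ℝ) := by
          refine Finset.sum_le_sum fun i _ => ?_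
          calc c ^ i ≤ |c ^ i| := le_abs_self _
            _ = |c| ^ i := abs_pow c i
            _ ≤ 1 := pow_le_one₀ (abs_nonneg c) hc
      _ = (k : ℝ) := by simp
  have h1c : 0 ≤ 1 - c := by
    have : c ≤ 1 := le_of_abs_le hc
    linarith
  calc (1 - c) * ∑ i ∈ Finset.range k, c ^ i ≤ (1 - c) * (k : ℝ) :=
        mul_le_mul_of_nonneg_left hsum h1c
    _ = (k : ℝ) * (1 - c) := mul_comm _ _

/-- `1 - cos θ ≤ θ² / 2` for `θ ≥ 0` (in fact always). -/
private lemma one_sub_cos_le (θ : ℝ) (hθ : 0 ≤ θ) (hθπ : θ ≤ Real.pi) :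
    1 - Real.cos θ ≤ θ ^ 2 / 2 := by
  have hhalf : Real.sin (θ / 2) ^ 2 = 1 / 2 - Real.cos θ / 2 := by
    have := Real.sin_sq_eq_half_sub (θ / 2)
    rwa [← mul_div_assoc, mul_div_cancel_left₀ θ (two_ne_zero)] at this
  have hsin : Real.sin (θ / 2) ≤ θ / 2 := Real.sin_le (by linarith)
  have hsinnn : 0 ≤ Real.sin (θ / 2) :=
    Real.sin_nonneg_of_nonneg_of_le_pi (by linarith) (by linarith)
  have hsq : Real.sin (θ / 2) ^ 2 ≤ (θ / 2) ^ 2 := by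
    exact pow_le_pow_left₀ hsinnn hsin 2
  rw [hhalf] at hsq
  nlinarith

/-- Exclusion test: if `f(x) ≠ 0` then `f` has no zero in the open ball
`B(x, r)` (for the angular distance `arccos⟪x,y⟫` on the sphere), with
`r = min{‖f(x)‖_∞/(‖f‖√D), √2}`. -/
theorem stmt_4 (n : ℕ) (hn : 0 < n) (d : Fin n → ℕ)
    (f : Fin n → MvPolynomial (Fin (n + 1)) ℝ)
    (hf : ∀ i, (f i).IsHomogeneous (d i))
    (x : EuclideanSpace ℝ (Fin (n + 1))) (hx : ‖x‖ = 1)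
    (hfx : ∃ i, eval (fun j => x j) (f i) ≠ 0)
    (y : EuclideanSpace ℝ (Fin (n + 1))) (hy : ‖y‖ = 1)
    (hyx : Real.arccos ⟪x, y⟫ <
      min ((Finset.univ.sup' ⟨⟨0, hn⟩, Finset.mem_univ _⟩
              fun i => |eval (fun j => x j) (f i)|) /
            ((Finset.univ.sup' ⟨⟨0, hn⟩, Finset.mem_univ _⟩ fun i => bwNorm (f i)) *
              Real.sqrt ((Finset.univ.sup d : ℕ) : ℝ)))
        (Real.sqrt 2)) :
    ∃ i, eval (fun j => y j) (f i) ≠ 0 := by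
  classical
  by_contra hcon
  push_neg at hcon
  set A := Finset.univ.sup' ⟨⟨0, hn⟩, Finset.mem_univ _⟩
      fun i => |eval (fun j => x j) (f i)| with hA
  set N := Finset.univ.sup' ⟨⟨0, hn⟩, Finset.mem_univ _⟩
      fun i => bwNorm (f i) with hN
  set D := ((Finset.univ.sup d : ℕ) : ℝ) with hD
  set θ := Real.arccos ⟪x, y⟫ with hθ
  set c := ⟪x, y⟫ with hc
  -- basic facts
  have hθ0 : 0 ≤ θ := Real.arccos_nonneg _
  have hθπ : θ ≤ Real.pi := Real.arccos_le_pi _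
  have hc1 : |c| ≤ 1 := by
    have := abs_real_inner_le_norm x y
    rwa [hx, hy, mul_one] at this
  have hcosθ : Real.cos θ = c :=
    Real.cos_arccos (neg_le_of_abs_le hc1) (le_of_abs_le hc1)
  -- inner products as sums
  have hxx : ∑ i, x i * x i = 1 := by
    have h1 : ⟪x, x⟫ = ∑ i, x i * x i := by
      simp only [PiLp.inner_apply, RCLike.inner_apply, conj_trivial]
    have h2 : ⟪x, x⟫ = 1 := by
      rw [real_inner_self_eq_norm_sq, hx]; norm_num
    rw [← h1, h2]
  have hyy : ∑ i, y i * y i = 1 := by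
    have h1 : ⟪y, y⟫ = ∑ i, y i * y i := by
      simp only [PiLp.inner_apply, RCLike.inner_apply, conj_trivial]
    have h2 : ⟪y, y⟫ = 1 := by
      rw [real_inner_self_eq_norm_sq, hy]; norm_num
    rw [← h1, h2]
  have hxy : ∑ i, x i * y i = c := by
    rw [hc]
    simp [PiLp.inner_apply, RCLike.inner_apply, conj_trivial]
    exact Finset.sum_congr rfl fun i _ => mul_comm _ _
  -- choose maximizing index
  obtain ⟨i₀, _, hi₀⟩ := Finset.exists_mem_eq_sup' (⟨⟨0, hn⟩, Finset.mem_univ _⟩ :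
    (Finset.univ : Finset (Fin n)).Nonempty) fun i => |eval (fun j => x j) (f i)|
  obtain ⟨iw, hiw⟩ := hfx
  have hApos : 0 < A := by
    have : |eval (fun j => x j) (f iw)| ≤ A := by
      rw [hA]; exact Finset.le_sup' (fun i => |eval (fun j => x j) (f i)|) (Finset.mem_univ iw)
    have h2 : 0 < |eval (fun j => x j) (f iw)| := abs_pos.2 hiw
    linarith
  -- apply Lipschitz to f i₀
  have hlip := lipschitz_sq (f i₀) (hf i₀) (fun j => x j) (fun j => y j)
  rw [hxx, hyy, hxy, hcon i₀, sub_zero, one_pow] at hlip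
  -- bound the RHS
  have hNi : bwNorm (f i₀) ≤ N := by
    rw [hN]; exact Finset.le_sup' (fun i => bwNorm (f i)) (Finset.mem_univ i₀)
  have hN0 : 0 ≤ bwNorm (f i₀) := Real.sqrt_nonneg _
  have hinner_eq : bwInner (f i₀) (f i₀) = bwNorm (f i₀) ^ 2 := by
    rw [bwNorm, Real.sq_sqrt (bwInner_self_nonneg _)]
  have hdi : ((d i₀ : ℕ) : ℝ) ≤ D := by
    rw [hD]
    exact_mod_cast Finset.le_sup (Finset.mem_univ i₀)
  have hdi0 : (0 : ℝ) ≤ ((d i₀ : ℕ) : ℝ) := Nat.cast_nonneg _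
  -- 1 - 2 c^k + 1 = 2 (1 - c^k) ≤ 2 * k * (1-c) ≤ k θ²
  have hck : 1 - 2 * c ^ (d i₀) + 1 ≤ ((d i₀ : ℕ) : ℝ) * θ ^ 2 := by
    have h1 : 1 - c ^ (d i₀) ≤ ((d i₀ : ℕ) : ℝ) * (1 - c) :=
      one_sub_pow_le c hc1 (d i₀)
    have h2 : 1 - c ≤ θ ^ 2 / 2 := by
      rw [← hcosθ]
      exact one_sub_cos_le θ hθ0 hθπ
    nlinarith
  have hck0 : 0 ≤ 1 - 2 * c ^ (d i₀) + 1 := by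
    have : c ^ (d i₀) ≤ 1 := by
      calc c ^ (d i₀) ≤ |c ^ (d i₀)| := le_abs_self _
        _ = |c| ^ (d i₀) := abs_pow c _
        _ ≤ 1 := pow_le_one₀ (abs_nonneg c) hc1
    linarith
  -- combine: A² ≤ N² * D * θ²
  have hmain : A ^ 2 ≤ N ^ 2 * D * θ ^ 2 := by
    have hA2 : A ^ 2 = (eval (fun j => x j) (f i₀)) ^ 2 := by
      rw [hA, hi₀, sq_abs]
    rw [hA2]
    calc (eval (fun j => x j) (f i₀)) ^ 2
        ≤ bwInner (f i₀) (f i₀) * (1 - 2 * c ^ (d i₀) + 1) := hlip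
      _ ≤ N ^ 2 * (((d i₀ : ℕ) : ℝ) * θ ^ 2) := by
          rw [hinner_eq]
          refine mul_le_mul ?_ hck hck0 (sq_nonneg N)
          exact pow_le_pow_left₀ hN0 hNi 2
      _ ≤ N ^ 2 * (D * θ ^ 2) := by
          refine mul_le_mul_of_nonneg_left ?_ (sq_nonneg N)
          exact mul_le_mul_of_nonneg_right hdi (sq_nonneg θ)
      _ = N ^ 2 * D * θ ^ 2 := by ring
  -- now derive a contradiction
  have hND0 : 0 ≤ N * Real.sqrt D := by
    have hN0' : 0 ≤ N := le_trans hN0 hNi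
    exact mul_nonneg hN0' (Real.sqrt_nonneg _)
  have hsqD : Real.sqrt D ^ 2 = D := Real.sq_sqrt (by rw [hD]; positivity)
  rcases eq_or_lt_of_le hND0 with heq | hpos
  · -- N * √D = 0 ⇒ N² * D = 0 ⇒ A² ≤ 0, contradiction
    have : (N * Real.sqrt D) ^ 2 = 0 := by rw [← heq]; ring
    have hzero : N ^ 2 * D = 0 := by
      rw [mul_pow, hsqD] at this
      exact this
    rw [hzero, zero_mul] at hmain
    nlinarith
  · -- θ < A / (N √D) ⇒ N√D θ < A ⇒ (N√D θ)² < A², contradiction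
    have hθlt : θ < A / (N * Real.sqrt D) := lt_of_lt_of_le hyx (min_le_left _ _)
    have h1 : θ * (N * Real.sqrt D) < A := by
      rw [lt_div_iff₀ hpos] at hθlt
      exact hθlt
    have h2 : (θ * (N * Real.sqrt D)) ^ 2 < A ^ 2 := by
      have hθND0 : 0 ≤ θ * (N * Real.sqrt D) := mul_nonneg hθ0 hND0
      exact pow_lt_pow_left₀ h1 hθND0 two_ne_zero
    have h3 : (θ * (N * Real.sqrt D)) ^ 2 = N ^ 2 * D * θ ^ 2 := by
      rw [mul_pow, mul_pow, hsqD]; ring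
    rw [h3] at h2
    linarith
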